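/- Let Λ ≅ ℤ be a free abelian group of rank 1 with generator ω. Identify S*(Λ) with ℤ[ω] and ℤ[Λ] with the Laurent polynomial ring ℤ[x,x⁻¹] via x = e^ω. Let I_a = (ω) and I_m be the ideal generated by the elements 1 - xⁿ for n ∈ ℤ. Then for every i ≥ 0 the map sending x to 1 + ω + ω² + ... + ωⁱ induces a ring isomorphism ℤ[x,x⁻¹]/I_m^{i+1} ≅ ℤ[ω]/I_a^{i+1}, with inverse induced by ω ↦ 1 - x⁻¹. -/

import Mathlib

open LaurentPolynomial Polynomial

/-- The augmentation ideal `I_m` of the Laurent polynomial ring `ℤ[x,x⁻¹] = ℤ[Λ]`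
for `Λ ≅ ℤ`: the ideal generated by the elements `1 - xⁿ`, `n ∈ ℤ`. -/
noncomputable def ImLaurent : Ideal (LaurentPolynomial ℤ) :=
  Ideal.span {p | ∃ n : ℤ, p = 1 - LaurentPolynomial.T n}

/-- The augmentation ideal `I_a = (ω)` of `S*(Λ) = ℤ[ω]` for `Λ ≅ ℤ`. -/
noncomputable def IaPoly : Ideal (Polynomial ℤ) :=
  Ideal.span {(Polynomial.X : Polynomial ℤ)}

namespace TruncAux

variable (i : ℕ)

/-- Abbreviation for the truncated polynomial ring. -/
noncomputable abbrev A := Polynomial ℤ ⧸ IaPoly ^ (i + 1)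

/-- Abbreviation for the truncated Laurent polynomial ring. -/
noncomputable abbrev B := LaurentPolynomial ℤ ⧸ ImLaurent ^ (i + 1)

noncomputable abbrev mkA : Polynomial ℤ →+* A i := Ideal.Quotient.mk (IaPoly ^ (i + 1))

noncomputable abbrev mkB : LaurentPolynomial ℤ →+* B i := Ideal.Quotient.mk (ImLaurent ^ (i + 1))

theorem mkA_X_pow : mkA i (Polynomial.X ^ (i + 1)) = 0 := by
  rw [Ideal.Quotient.eq_zero_iff_mem, IaPoly, Ideal.span_singleton_pow]
  exact Ideal.mem_span_singleton_self _

theorem geom_inv : mkA i (∑ k ∈ Finset.range (i + 1), Polynomial.X ^ k)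
    * (1 - mkA i Polynomial.X) = 1 := by
  have h := geom_sum_mul (Polynomial.X : Polynomial ℤ) (i + 1)
  have h2 : mkA i ((∑ k ∈ Finset.range (i + 1), Polynomial.X ^ k) * (Polynomial.X - 1))
      = mkA i (Polynomial.X ^ (i + 1) - 1) := by rw [h]
  rw [map_sub, map_one, mkA_X_pow, map_mul, map_sub, map_one, zero_sub] at h2
  linear_combination -h2

/-- The unit `1 + ω + ⋯ + ωⁱ` of `A i`, with inverse `1 - ω`. -/
noncomputable def U : (A i)ˣ :=
  ⟨mkA i (∑ k ∈ Finset.range (i + 1), Polynomial.X ^ k), 1 - mkA i Polynomial.X,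
    geom_inv i, by rw [mul_comm]; exact geom_inv i⟩

/-- The forward ring hom `ℤ[T;T⁻¹] → A i`, sending `T n` to `(U i)^n`. -/
noncomputable def F : LaurentPolynomial ℤ →+* A i :=
  (AddMonoidAlgebra.lift ℤ (A i) ℤ ((Units.coeHom (A i)).comp (zpowersHom (A i)ˣ (U i)))).toRingHom

theorem F_T (n : ℤ) : F i (LaurentPolynomial.T n) = ((U i ^ n : (A i)ˣ) : A i) := by
  show (AddMonoidAlgebra.lift ℤ (A i) ℤ ((Units.coeHom (A i)).comp (zpowersHom (A i)ˣ (U i))))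
    (AddMonoidAlgebra.single n 1) = _
  rw [AddMonoidAlgebra.lift_single]
  simp

theorem F_gen (p : LaurentPolynomial ℤ)
    (hp : p ∈ ({q | ∃ n : ℤ, q = 1 - LaurentPolynomial.T n} : Set (LaurentPolynomial ℤ))) :
    F i p ∈ Ideal.span {mkA i Polynomial.X} := by
  obtain ⟨n, rfl⟩ := hp
  set J : Ideal (A i) := Ideal.span {mkA i Polynomial.X} with hJ
  have hUJ : Units.map (Ideal.Quotient.mk J).toMonoidHom (U i) = 1 := by
    apply Units.ext
    show Ideal.Quotient.mk J ((U i : A i)) = 1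
    have hmem : (U i : A i) - 1 ∈ J := by
      have h1 : ((∑ k ∈ Finset.range (i + 1), Polynomial.X ^ k) - 1 : Polynomial ℤ)
          = Polynomial.X * ∑ k ∈ Finset.range i, Polynomial.X ^ k := by
        rw [geom_sum_succ]; ring
      have h2 : (U i : A i) - 1
          = mkA i Polynomial.X * mkA i (∑ k ∈ Finset.range i, Polynomial.X ^ k) := by
        show mkA i (∑ k ∈ Finset.range (i + 1), Polynomial.X ^ k) - 1 = _
        rw [← map_mul, ← h1, map_sub, map_one]
      rw [h2]
      exact Ideal.mul_mem_right _ _ (Ideal.mem_span_singleton_self _)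
    have := (Ideal.Quotient.eq (I := J)).mpr hmem
    rwa [RingHom.map_one] at this
  have : Ideal.Quotient.mk J (F i (1 - LaurentPolynomial.T n)) = 0 := by
    rw [RingHom.map_sub (F i), RingHom.map_one (F i), F_T,
      map_sub (Ideal.Quotient.mk J), map_one (Ideal.Quotient.mk J)]
    have h3 : Ideal.Quotient.mk J ((U i ^ n : (A i)ˣ) : A i)
        = ((Units.map (Ideal.Quotient.mk J).toMonoidHom (U i ^ n) : _ˣ) : _) := rfl
    rw [h3, MonoidHom.map_zpow, hUJ, one_zpow, Units.val_one, sub_self]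
  rwa [Ideal.Quotient.eq_zero_iff_mem] at this

theorem F_ker : ∀ a ∈ ImLaurent ^ (i + 1), F i a = 0 := by
  intro a ha
  have hmap : (ImLaurent ^ (i + 1)).map (F i) ≤ Ideal.span {mkA i Polynomial.X} ^ (i + 1) := by
    rw [Ideal.map_pow]
    apply Ideal.pow_right_mono
    rw [ImLaurent, Ideal.map_span, Ideal.span_le]
    rintro q ⟨p, hp, rfl⟩
    exact F_gen i p hp
  have hJ0 : Ideal.span {mkA i Polynomial.X} ^ (i + 1) = (⊥ : Ideal (A i)) := by
    rw [Ideal.span_singleton_pow, ← map_pow, mkA_X_pow, Ideal.span_singleton_eq_bot]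
  have := hmap (Ideal.mem_map_of_mem (F i) ha)
  rwa [hJ0, Ideal.mem_bot] at this

/-- The induced map `B i → A i`. -/
noncomputable def Fbar : B i →+* A i := Ideal.Quotient.lift (ImLaurent ^ (i + 1)) (F i) (F_ker i)

theorem wmem : (1 - LaurentPolynomial.T (-1) : LaurentPolynomial ℤ) ∈ ImLaurent :=
  Ideal.subset_span ⟨-1, rfl⟩

theorem wpow : (mkB i (1 - LaurentPolynomial.T (-1))) ^ (i + 1) = 0 := by
  rw [← map_pow, Ideal.Quotient.eq_zero_iff_mem]
  exact Ideal.pow_mem_pow (wmem) _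

/-- The backward ring hom `ℤ[X] → B i`, evaluation at `1 - T⁻¹`. -/
noncomputable def G : Polynomial ℤ →+* B i :=
  Polynomial.eval₂RingHom (Int.castRingHom (B i)) (mkB i (1 - LaurentPolynomial.T (-1)))

theorem G_X : G i Polynomial.X = mkB i (1 - LaurentPolynomial.T (-1)) := by
  simp [G]

theorem G_ker : ∀ a ∈ IaPoly ^ (i + 1), G i a = 0 := by
  intro a ha
  rw [IaPoly, Ideal.span_singleton_pow, Ideal.mem_span_singleton'] at ha
  obtain ⟨c, rfl⟩ := ha
  rw [map_mul, map_pow, G_X, wpow, mul_zero]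

/-- The induced map `A i → B i`. -/
noncomputable def Gbar : A i →+* B i := Ideal.Quotient.lift (IaPoly ^ (i + 1)) (G i) (G_ker i)

theorem T_mul_T : (LaurentPolynomial.T 1 : LaurentPolynomial ℤ) * LaurentPolynomial.T (-1) = 1 := by
  rw [← LaurentPolynomial.T_add]; norm_num

/-- The unit `T 1` of `B i`. -/
noncomputable def W : (B i)ˣ :=
  ⟨mkB i (LaurentPolynomial.T 1), mkB i (LaurentPolynomial.T (-1)),
    by rw [← map_mul, T_mul_T, map_one], by rw [← map_mul, mul_comm, T_mul_T, map_one]⟩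

theorem mkB_T (n : ℤ) : mkB i (LaurentPolynomial.T n) = ((W i ^ n : (B i)ˣ) : B i) := by
  induction n using Int.induction_on with
  | zero => simp [LaurentPolynomial.T_zero]
  | succ k ih =>
    rw [LaurentPolynomial.T_add, map_mul, ih, zpow_add_one, Units.val_mul]
    rfl
  | pred k ih =>
    have e : (LaurentPolynomial.T (-(k : ℤ) - 1) : LaurentPolynomial ℤ)
        = LaurentPolynomial.T (-(k : ℤ)) * LaurentPolynomial.T (-1) :=
      LaurentPolynomial.T_sub (-(k : ℤ)) 1
    rw [e, map_mul, ih, zpow_sub, zpow_one, Units.val_mul]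
    rfl

theorem G_geom : G i (∑ k ∈ Finset.range (i + 1), Polynomial.X ^ k)
    = mkB i (LaurentPolynomial.T 1) := by
  have hGsum : G i (∑ k ∈ Finset.range (i + 1), Polynomial.X ^ k)
      = mkB i (∑ k ∈ Finset.range (i + 1), (1 - LaurentPolynomial.T (-1)) ^ k) := by
    rw [map_sum, map_sum]
    refine Finset.sum_congr rfl fun k _ => ?_
    rw [map_pow, map_pow, G_X]
  rw [hGsum, Ideal.Quotient.eq]
  have hg := geom_sum_mul (1 - LaurentPolynomial.T (-1) : LaurentPolynomial ℤ) (i + 1)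
  have key : ((∑ k ∈ Finset.range (i + 1), (1 - LaurentPolynomial.T (-1)) ^ k)
      - LaurentPolynomial.T 1 : LaurentPolynomial ℤ)
      = -(LaurentPolynomial.T 1 * (1 - LaurentPolynomial.T (-1)) ^ (i + 1)) := by
    linear_combination (-(LaurentPolynomial.T 1 : LaurentPolynomial ℤ)) * hg
      - (∑ k ∈ Finset.range (i + 1),
          ((1 : LaurentPolynomial ℤ) - LaurentPolynomial.T (-1)) ^ k) * T_mul_T
  rw [key]
  exact neg_mem (Ideal.mul_mem_left _ _ (Ideal.pow_mem_pow (wmem) _))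

end TruncAux

/-- Extensionality for ring homs out of `ℤ[T;T⁻¹]`: agreement on all `T n` suffices. -/
theorem laurent_ringHom_ext {S : Type*} [CommRing S] (f g : LaurentPolynomial ℤ →+* S)
    (h : ∀ n : ℤ, f (LaurentPolynomial.T n) = g (LaurentPolynomial.T n)) : f = g := by
  have := AddMonoidAlgebra.algHom_ext (B := S)
    (φ₁ := f.toIntAlgHom) (φ₂ := g.toIntAlgHom) (fun n => h n) (Subsingleton.elim _ _)
  exact congrArg AlgHom.toRingHom this

namespace TruncAux

variable (i : ℕ)

theorem GF : (Gbar i).comp (Fbar i) = RingHom.id (B i) := by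
  apply Ideal.Quotient.ringHom_ext
  apply laurent_ringHom_ext
  intro n
  show Gbar i (Fbar i (mkB i (LaurentPolynomial.T n))) = mkB i (LaurentPolynomial.T n)
  have h1 : Fbar i (mkB i (LaurentPolynomial.T n)) = ((U i ^ n : (A i)ˣ) : A i) := by
    rw [Fbar, Ideal.Quotient.lift_mk, F_T]
  rw [h1]
  have hmapU : Units.map (Gbar i).toMonoidHom (U i) = W i := by
    apply Units.ext
    show Gbar i ((U i : A i)) = mkB i (LaurentPolynomial.T 1)
    show Gbar i (mkA i (∑ k ∈ Finset.range (i + 1), Polynomial.X ^ k)) = _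
    rw [Gbar, Ideal.Quotient.lift_mk, G_geom]
  have h2 : Gbar i ((U i ^ n : (A i)ˣ) : A i)
      = ((Units.map (Gbar i).toMonoidHom (U i ^ n) : (B i)ˣ) : B i) := rfl
  rw [h2, MonoidHom.map_zpow, hmapU, mkB_T]

theorem FG : (Fbar i).comp (Gbar i) = RingHom.id (A i) := by
  apply Ideal.Quotient.ringHom_ext
  apply Polynomial.ringHom_ext
  · intro a
    show Fbar i (Gbar i (mkA i (Polynomial.C a))) = mkA i (Polynomial.C a)
    rw [eq_intCast (Polynomial.C : ℤ →+* Polynomial ℤ) a, map_intCast, map_intCast, map_intCast]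
  · show Fbar i (Gbar i (mkA i Polynomial.X)) = mkA i Polynomial.X
    rw [Gbar, Ideal.Quotient.lift_mk, G_X, Fbar, Ideal.Quotient.lift_mk, map_sub, map_one, F_T]
    have h4 : ((U i ^ (-1 : ℤ) : (A i)ˣ) : A i) = 1 - mkA i Polynomial.X := by
      rw [zpow_neg_one]; rfl
    rw [h4]; ring

end TruncAux

open TruncAux in
/-- For every `i ≥ 0` there is a ring isomorphism
`ℤ[x,x⁻¹]/I_m^{i+1} ≃ ℤ[ω]/I_a^{i+1}` sending `x` to `1 + ω + ⋯ + ωⁱ`,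
whose inverse sends `ω` to `1 - x⁻¹`. -/
theorem truncation_iso_rank_one (i : ℕ) :
    ∃ e : (LaurentPolynomial ℤ ⧸ ImLaurent ^ (i + 1)) ≃+*
          (Polynomial ℤ ⧸ IaPoly ^ (i + 1)),
      e (Ideal.Quotient.mk (ImLaurent ^ (i + 1)) (LaurentPolynomial.T 1)) =
        Ideal.Quotient.mk (IaPoly ^ (i + 1)) (∑ k ∈ Finset.range (i + 1), Polynomial.X ^ k) ∧
      e.symm (Ideal.Quotient.mk (IaPoly ^ (i + 1)) Polynomial.X) =
        Ideal.Quotient.mk (ImLaurent ^ (i + 1)) (1 - LaurentPolynomial.T (-1)) := by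
  refine ⟨RingEquiv.ofRingHom (Fbar i) (Gbar i) (FG i) (GF i), ?_, ?_⟩
  · show Fbar i (mkB i (LaurentPolynomial.T 1)) = mkA i (∑ k ∈ Finset.range (i + 1), Polynomial.X ^ k)
    rw [Fbar, Ideal.Quotient.lift_mk, F_T, zpow_one]
    rfl
  · show Gbar i (mkA i Polynomial.X) = mkB i (1 - LaurentPolynomial.T (-1))
    rw [Gbar, Ideal.Quotient.lift_mk, G_X]
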